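/- Ranked Pairs respects initial segments: let σ be the Ranked Pairs output on votes (σ_1,...,σ_n) over a finite set V, and let V' ⊆ V be the set of transactions in some initial segment of σ. If each vote is restricted to V' and Ranked Pairs is run on the restricted votes (with a consistent tie-breaking order on edges), the resulting output equals the restriction of σ to V', i.e., σ extends the output on the restricted input. -/

import Mathlib

/-- The fraction of the `n` voters (each voter `i` ranking transactions by the
injective rank function `rank i`) that rank `a` before `b`. -/
def voteWeight {V : Type*} (n : ℕ) (rank : Fin n → V → ℕ) (a b : V) : ℚ :=
  ((Finset.univ.filter (fun i : Fin n => rank i a < rank i b)).card : ℚ) / n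

/-- A set `H` of directed edges has a directed cycle. -/
def hasCycle {V : Type*} (H : Set (V × V)) : Prop :=
  ∃ v : V, Relation.TransGen (fun a b : V => (a, b) ∈ H) v v

/-- The greedy (Ranked Pairs) edge-selection process: iterate over the list of
edges, adding each edge to the accumulated set `H` unless doing so would create a
directed cycle in `H`. -/
noncomputable def greedy {V : Type*} : List (V × V) → Set (V × V) → Set (V × V)
  | [], H => H
  | e :: rest, H =>
      greedy rest
        (@ite _ (hasCycle (insert e H)) (Classical.propDecidable _) H (insert e H))



lemma greedy_mono_subset {V : Type*} (L : List (V × V)) (H : Set (V × V)) :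
    H ⊆ greedy L H := by
  induction L generalizing H with
  | nil => simp [greedy]
  | cons e rest ih =>
    simp only [greedy]
    split
    · exact ih H
    · exact (Set.subset_insert e H).trans (ih _)

lemma hasCycle_mono {V : Type*} {H K : Set (V × V)} (h : H ⊆ K) :
    hasCycle H → hasCycle K := by
  rintro ⟨v, hv⟩
  exact ⟨v, Relation.TransGen.mono (fun a b hab => h hab) _ _ hv⟩

lemma not_hasCycle_empty {V : Type*} : ¬ hasCycle (∅ : Set (V × V)) := by
  rintro ⟨v, hv⟩
  cases hv with
  | single h => exact h.elim
  | tail _ h => exact h.elim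

lemma cycle_insert {V : Type*} {H : Set (V × V)} {a b : V}
    (hH : ¬ hasCycle H) (hc : hasCycle (insert (a, b) H)) :
    Relation.ReflTransGen (fun x y => (x, y) ∈ H) b a := by
  obtain ⟨v, hv⟩ := hc
  have key : ∀ x y : V, Relation.TransGen (fun x y => (x, y) ∈ insert (a, b) H) x y →
      Relation.TransGen (fun x y => (x, y) ∈ H) x y ∨
      (Relation.ReflTransGen (fun x y => (x, y) ∈ H) x a ∧
       Relation.ReflTransGen (fun x y => (x, y) ∈ H) b y) := by
    intro x y h
    induction h using Relation.TransGen.head_induction_on with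
    | single h' =>
      rcases Set.mem_insert_iff.mp h' with h' | h'
      · obtain ⟨rfl, rfl⟩ := Prod.mk.injEq .. ▸ h'
        exact Or.inr ⟨.refl, .refl⟩
      · exact Or.inl (.single h')
    | head h' hrest ih =>
      rcases Set.mem_insert_iff.mp h' with h'' | h''
      · obtain ⟨rfl, rfl⟩ := Prod.mk.injEq .. ▸ h''
        rcases ih with ht | ⟨h1, h2⟩
        · exact Or.inr ⟨.refl, ht.to_reflTransGen⟩
        · exact Or.inr ⟨.refl, h2⟩
      · rcases ih with ht | ⟨h1, h2⟩
        · exact Or.inl (ht.head h'')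
        · exact Or.inr ⟨h1.head h'', h2⟩
  rcases key v v hv with ht | ⟨h1, h2⟩
  · exact absurd ⟨v, ht⟩ hH
  · exact h2.trans h1

lemma path_in_restrict {V : Type*} (V' : Set V) (G H : Set (V × V))
    (hHG : H ⊆ G)
    (hdown : ∀ a b : V, b ∈ V' → (a, b) ∈ G → a ∈ V')
    {a b : V} (ha : a ∈ V')
    (h : Relation.ReflTransGen (fun x y => (x, y) ∈ H) b a) :
    Relation.ReflTransGen
      (fun x y => (x, y) ∈ H ∩ {e : V × V | e.1 ∈ V' ∧ e.2 ∈ V'}) b a := by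
  have key : b ∈ V' ∧ Relation.ReflTransGen
      (fun x y => (x, y) ∈ H ∩ {e : V × V | e.1 ∈ V' ∧ e.2 ∈ V'}) b a := by
    induction h using Relation.ReflTransGen.head_induction_on with
    | refl => exact ⟨ha, .refl⟩
    | head h' hrest ih =>
      obtain ⟨hc, hp⟩ := ih
      have hx : _ ∈ V' := hdown _ _ hc (hHG h')
      exact ⟨hx, .head ⟨h', hx, hc⟩ hp⟩
  exact key.2

lemma greedy_restrict {V : Type*} (V' : Set V) (G : Set (V × V))
    (hdown : ∀ a b : V, b ∈ V' → (a, b) ∈ G → a ∈ V')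
    {L₀ L₀' : List (V × V)} (hsub : L₀'.Sublist L₀) :
    ∀ H : Set (V × V),
      (∀ e ∈ L₀, e.1 ∈ V' → e.2 ∈ V' → e ∈ L₀') →
      (∀ e ∈ L₀', e.1 ∈ V' ∧ e.2 ∈ V') →
      L₀.Nodup → ¬ hasCycle H → greedy L₀ H ⊆ G →
      greedy L₀' (H ∩ {e : V × V | e.1 ∈ V' ∧ e.2 ∈ V'}) =
        greedy L₀ H ∩ {e : V × V | e.1 ∈ V' ∧ e.2 ∈ V'} := by
  set S : Set (V × V) := {e : V × V | e.1 ∈ V' ∧ e.2 ∈ V'} with hS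
  induction hsub with
  | slnil => intro H _ _ _ _ _; rfl
  | @cons L₀' rest e hsub ih =>
    intro H hmem hmem' hnd hcy hsubG
    have heS : e ∉ S := by
      intro heS
      have : e ∈ L₀' := hmem e List.mem_cons_self heS.1 heS.2
      exact (List.nodup_cons.mp hnd).1 (hsub.mem this)
    have hstep : greedy (e :: rest) H =
        greedy rest (@ite _ (hasCycle (insert e H)) (Classical.propDecidable _)
          H (insert e H)) := rfl
    rw [hstep] at hsubG ⊢
    by_cases hc : hasCycle (insert e H)
    · rw [if_pos hc] at hsubG ⊢
      exact ih H (fun f hf h1 h2 => hmem f (List.mem_cons_of_mem e hf) h1 h2)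
        hmem' (List.nodup_cons.mp hnd).2 hcy hsubG
    · rw [if_neg hc] at hsubG ⊢
      have hinter : insert e H ∩ S = H ∩ S := by
        ext f
        simp only [Set.mem_inter_iff, Set.mem_insert_iff]
        constructor
        · rintro ⟨rfl | hf, hfs⟩
          · exact absurd hfs heS
          · exact ⟨hf, hfs⟩
        · rintro ⟨hf, hfs⟩; exact ⟨Or.inr hf, hfs⟩
      rw [← hinter]
      exact ih (insert e H)
        (fun f hf h1 h2 => hmem f (List.mem_cons_of_mem e hf) h1 h2)
        hmem' (List.nodup_cons.mp hnd).2 hc hsubG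
  | @cons_cons L₀' rest e hsub ih =>
    intro H hmem hmem' hnd hcy hsubG
    have heS : e ∈ S := hmem' e List.mem_cons_self
    have hstep : ∀ (l : List (V × V)) (K : Set (V × V)), greedy (e :: l) K =
        greedy l (@ite _ (hasCycle (insert e K)) (Classical.propDecidable _)
          K (insert e K)) := fun _ _ => rfl
    rw [hstep] at hsubG ⊢
    rw [hstep]
    by_cases hc : hasCycle (insert e H)
    · rw [if_pos hc] at hsubG ⊢
      -- original rejects; restricted must reject too
      have hHG : H ⊆ G := (greedy_mono_subset rest H).trans hsubG
      obtain ⟨a, b⟩ := e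
      have hpath := cycle_insert hcy hc
      have hpath' := path_in_restrict V' G H hHG hdown heS.1 hpath
      have hc' : hasCycle (insert (a, b) (H ∩ S)) := by
        refine ⟨a, Relation.TransGen.head' (Set.mem_insert _ _) ?_⟩
        exact Relation.ReflTransGen.mono (fun x y hxy => Set.mem_insert_iff.mpr (Or.inr hxy)) _ _ hpath'
      rw [if_pos hc']
      exact ih H (fun f hf h1 h2 => by
          rcases List.mem_cons.mp (hmem f (List.mem_cons_of_mem _ hf) h1 h2) with rfl | h
          · exact absurd hf (List.nodup_cons.mp hnd).1
          · exact h)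
        (fun f hf => hmem' f (List.mem_cons_of_mem _ hf))
        (List.nodup_cons.mp hnd).2 hcy hsubG
    · rw [if_neg hc] at hsubG ⊢
      have hc' : ¬ hasCycle (insert e (H ∩ S)) := by
        intro h
        exact hc (hasCycle_mono (Set.insert_subset_insert Set.inter_subset_left) h)
      rw [if_neg hc']
      have hinter : insert e H ∩ S = insert e (H ∩ S) := by
        ext f
        simp only [Set.mem_inter_iff, Set.mem_insert_iff]
        constructor
        · rintro ⟨rfl | hf, hfs⟩
          · exact Or.inl rfl
          · exact Or.inr ⟨hf, hfs⟩
        · rintro (rfl | ⟨hf, hfs⟩)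
          · exact ⟨Or.inl rfl, heS⟩
          · exact ⟨Or.inr hf, hfs⟩
      rw [← hinter]
      exact ih (insert e H) (fun f hf h1 h2 => by
          rcases List.mem_cons.mp (hmem f (List.mem_cons_of_mem _ hf) h1 h2) with rfl | h
          · exact absurd hf (List.nodup_cons.mp hnd).1
          · exact h)
        (fun f hf => hmem' f (List.mem_cons_of_mem _ hf))
        (List.nodup_cons.mp hnd).2 hc hsubG

/-- Ranked Pairs respects initial segments: if `V'` is downward closed under the
Ranked Pairs output order (i.e. is the set of transactions of an initial segment of
the output), and Ranked Pairs is rerun on the votes restricted to `V'` (the edge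
list `L'` is the sublist of `L` of edges inside `V'`, which keeps the induced
tie-breaking order; note the restricted votes induce the same pairwise weights),
then on pairs inside `V'` the restricted output agrees with the original output,
i.e. the original output extends the output on the restricted input. -/
theorem rankedPairs_respects_initial_segments {V : Type*} [Fintype V]
    {n : ℕ} (hn : 0 < n)
    (rank : Fin n → V → ℕ) (hinj : ∀ i, Function.Injective (rank i))
    (L : List (V × V))
    (hmemL : ∀ a b : V, a ≠ b → (a, b) ∈ L)
    (hnd : L.Nodup)
    (hirr : ∀ e ∈ L, e.1 ≠ e.2)
    (hsort : L.Pairwise (fun e f => voteWeight n rank f.1 f.2 ≤ voteWeight n rank e.1 e.2))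
    (V' : Set V)
    (hdown : ∀ a b : V, b ∈ V' → (a, b) ∈ greedy L ∅ → a ∈ V')
    (L' : List (V × V))
    (hsub : L'.Sublist L)
    (hmemL' : ∀ e : V × V, e ∈ L' ↔ e ∈ L ∧ e.1 ∈ V' ∧ e.2 ∈ V') :
    ∀ a b : V, a ∈ V' → b ∈ V' →
      ((a, b) ∈ greedy L' ∅ ↔ (a, b) ∈ greedy L ∅) := by
  intro a b ha hb
  have key := greedy_restrict V' (greedy L ∅) hdown hsub ∅
    (fun e he h1 h2 => (hmemL' e).mpr ⟨he, h1, h2⟩)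
    (fun e he => ((hmemL' e).mp he).2)
    hnd not_hasCycle_empty (subset_refl _)
  rw [Set.empty_inter] at key
  constructor
  · intro h; rw [key] at h; exact h.1
  · intro h; rw [key]; exact ⟨h, ha, hb⟩
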